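/- If 1 ≤ k, m ≤ n with k ≠ m, λ_k ≠ λ_m, and λ_k, λ_m ∉ {a_0, …, a_n}, then ∑_{i=0}^{n} v_i / ((a_i − λ_k)(a_i − λ_m)) = 0 (orthogonality of the elliptic coordinate directions). -/

import Mathlib

open Polynomial Finset

lemma leadingCoeff_basis {s : Finset ℕ} {a : ℕ → ℝ} {i : ℕ} :
    (Lagrange.basis s a i).leadingCoeff = ∏ j ∈ s.erase i, (a i - a j)⁻¹ := by
  rw [Lagrange.basis, leadingCoeff_prod]
  refine Finset.prod_congr rfl fun j hj => ?_
  rw [Lagrange.basisDivisor, leadingCoeff_mul, leadingCoeff_C, leadingCoeff_X_sub_C, mul_one]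

lemma key (n : ℕ) (a : ℕ → ℝ) (ha : Set.InjOn a (Finset.range (n+1)))
    (g : Polynomial ℝ) (hg : g.degree < n) :
    ∑ i ∈ Finset.range (n+1), Polynomial.eval (a i) g *
      (∏ j ∈ (Finset.range (n+1)).erase i, (a i - a j))⁻¹ = 0 := by
  have hcard : (Finset.range (n+1)).card = n + 1 := Finset.card_range _
  have hint : g = Lagrange.interpolate (Finset.range (n+1)) a
      (fun i => Polynomial.eval (a i) g) :=
    Lagrange.eq_interpolate ha (by rw [hcard]; exact hg.trans (by exact_mod_cast Nat.lt_succ_self n))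
  have h0 : g.coeff n = 0 := coeff_eq_zero_of_degree_lt hg
  have hc := congrArg (fun p => Polynomial.coeff p n) hint
  simp only [Lagrange.interpolate_apply, finset_sum_coeff, coeff_C_mul] at hc
  rw [h0] at hc
  rw [← hc.symm]
  refine Finset.sum_congr rfl fun i hi => ?_
  have hnd : (Lagrange.basis (Finset.range (n+1)) a i).natDegree = n := by
    rw [Lagrange.natDegree_basis ha hi, hcard]; simp
  have hcoeff : (Lagrange.basis (Finset.range (n+1)) a i).coeff n =
      (Lagrange.basis (Finset.range (n+1)) a i).leadingCoeff := by
    rw [Polynomial.leadingCoeff, hnd]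
  rw [hcoeff, leadingCoeff_basis, Finset.prod_inv_distrib]

theorem stmt_13 (n : ℕ) (hn : 1 ≤ n) (a : ℕ → ℝ)
    (ha : ∀ i ≤ n, ∀ j ≤ n, i ≠ j → a i ≠ a j)
    (lam : ℕ → ℝ) (v : ℕ → ℝ)
    (hv : ∀ i ≤ n, v i = a i * (∏ k ∈ Finset.Icc 1 n, (lam k - a i)) /
      ∏ j ∈ (Finset.range (n + 1)).erase i, (a j - a i))
    (k m : ℕ) (hk : 1 ≤ k) (hk2 : k ≤ n) (hm : 1 ≤ m) (hm2 : m ≤ n)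
    (hkm : k ≠ m) (hlkm : lam k ≠ lam m)
    (hlk : ∀ i ≤ n, lam k ≠ a i) (hlm : ∀ i ≤ n, lam m ≠ a i) :
    ∑ i ∈ Finset.range (n + 1), v i / ((a i - lam k) * (a i - lam m)) = 0 := by
  have hn2 : 2 ≤ n := by omega
  have hainj : Set.InjOn a (Finset.range (n+1)) := by
    intro i hi j hj h
    by_contra hne
    exact ha i (by simpa [Nat.lt_succ_iff] using hi) j (by simpa [Nat.lt_succ_iff] using hj) hne h
  set S : Finset ℕ := ((Finset.Icc 1 n).erase k).erase m with hS
  have hmk : m ∈ (Finset.Icc 1 n).erase k :=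
    Finset.mem_erase.mpr ⟨fun h => hkm h.symm, Finset.mem_Icc.mpr ⟨hm, hm2⟩⟩
  have hkIcc : k ∈ Finset.Icc 1 n := Finset.mem_Icc.mpr ⟨hk, hk2⟩
  have hScard : S.card = n - 2 := by
    rw [hS, Finset.card_erase_of_mem hmk, Finset.card_erase_of_mem hkIcc, Nat.card_Icc]
    omega
  set g : Polynomial ℝ := X * ∏ j ∈ S, (C (lam j) - X) with hg
  have hdegg : g.degree < (n : WithBot ℕ) := by
    have h1 : ∀ j ∈ S, (C (lam j) - X : Polynomial ℝ) ≠ 0 := by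
      intro j _
      intro h
      have := congrArg (fun p => Polynomial.coeff p 1) h
      simp at this
    have hdp : (∏ j ∈ S, (C (lam j) - X : Polynomial ℝ)).degree = (S.card : WithBot ℕ) := by
      rw [Polynomial.degree_prod]
      rw [Finset.sum_congr rfl (fun j _ => show (C (lam j) - X : Polynomial ℝ).degree = 1 by
        rw [show (C (lam j) - X : Polynomial ℝ) = -(X - C (lam j)) by ring, degree_neg,
          degree_X_sub_C])]
      simp
    rw [hg, degree_mul, degree_X, hdp, hScard]
    rw [show ((1 : WithBot ℕ) + ((n - 2 : ℕ) : WithBot ℕ)) = (((1 + (n-2) : ℕ)) : WithBot ℕ) by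
      push_cast; ring]
    exact_mod_cast (by omega : 1 + (n - 2) < n)
  have hmain := key n a hainj g hdegg
  have hstep : ∑ i ∈ Finset.range (n + 1), v i / ((a i - lam k) * (a i - lam m))
      = (-1)^n * ∑ i ∈ Finset.range (n+1), Polynomial.eval (a i) g *
        (∏ j ∈ (Finset.range (n+1)).erase i, (a i - a j))⁻¹ := by
    rw [Finset.mul_sum]
    refine Finset.sum_congr rfl fun i hi => ?_
    have hin : i ≤ n := by simpa [Nat.lt_succ_iff] using Finset.mem_range.mp hi
    rw [hv i hin]
    -- split the Icc product
    have hsplit : ∏ j ∈ Finset.Icc 1 n, (lam j - a i)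
        = (lam k - a i) * ((lam m - a i) * ∏ j ∈ S, (lam j - a i)) := by
      rw [← Finset.mul_prod_erase _ _ hkIcc, ← Finset.mul_prod_erase _ _ hmk]
    have heval : Polynomial.eval (a i) g = a i * ∏ j ∈ S, (lam j - a i) := by
      simp [hg, eval_prod]
    -- denominator rewriting
    have hcerase : ((Finset.range (n+1)).erase i).card = n := by
      rw [Finset.card_erase_of_mem hi, Finset.card_range]
      omega
    have hDden : ∏ j ∈ (Finset.range (n+1)).erase i, (a j - a i)
        = (-1)^n * ∏ j ∈ (Finset.range (n+1)).erase i, (a i - a j) := by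
      rw [Finset.prod_congr rfl (fun j _ => show a j - a i = (-1) * (a i - a j) by ring),
        Finset.prod_mul_distrib, Finset.prod_const, hcerase]
    have hE : ∏ j ∈ (Finset.range (n+1)).erase i, (a i - a j) ≠ 0 := by
      refine Finset.prod_ne_zero_iff.mpr fun j hj => ?_
      rcases Finset.mem_erase.mp hj with ⟨hij, hj'⟩
      have : a i ≠ a j := ha i hin j (by simpa [Nat.lt_succ_iff] using Finset.mem_range.mp hj') hij.symm
      exact sub_ne_zero_of_ne this
    have hk0 : a i - lam k ≠ 0 := sub_ne_zero_of_ne (fun h => hlk i hin h.symm)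
    have hm0 : a i - lam m ≠ 0 := sub_ne_zero_of_ne (fun h => hlm i hin h.symm)
    rw [hsplit, heval, hDden]
    have hneg : ((-1 : ℝ))^n ≠ 0 := by positivity
    set P := ∏ j ∈ S, (lam j - a i) with hP
    set E := ∏ j ∈ (Finset.range (n+1)).erase i, (a i - a j) with hEE
    have hsq : ((-1:ℝ))^(n*2) = 1 := by
      rw [mul_comm, pow_mul]; norm_num
    field_simp
    ring_nf
    simp only [hsq]
    ring
  rw [hstep, hmain, mul_zero]
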